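/- Let A be a σ-structure with maximum relation arity k := ar(σ) and tuple set τ(A). Then the efficient colored multigraph representation Ĝ(A) satisfies |V(Ĝ(A))| ≤ (1 + k·k!)·|τ(A)| and, for all i,j ∈ [k], |E_{i,j}^{Ĝ(A)}| ≤ 2·k·k!·|τ(A)|; hence the total number of edges of Ĝ(A) is at most 2·k³·k!·|τ(A)|. -/

import Mathlib

/-- The similarity type of two tuples (represented as lists). -/
def stpL {V : Type*} (x y : List V) : Set (ℕ × ℕ) :=
  {p | ∃ (h1 : p.1 < x.length) (h2 : p.2 < y.length), x.get ⟨p.1, h1⟩ = y.get ⟨p.2, h2⟩}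

/-- `s` is a slice of `t`: nonempty, pairwise distinct entries, entries among those of `t`. -/
def sliceOf {V : Type*} (s t : List V) : Prop :=
  s ≠ [] ∧ s.Nodup ∧ ∀ x ∈ s, x ∈ t

/-- A relational structure over signature `S` with universe `V`. -/
structure Struct (S : Type*) (V : Type*) where
  rel : S → Set (List V)

/-- The set of all tuples occurring in some relation of the structure. -/
def Struct.tuples {S V : Type*} (A : Struct S V) : Set (List V) := ⋃ R, A.rel R

/-- The set `S(τ(A))` of all slices of tuples of `A`. -/
def slicesOf {S V : Type*} (A : Struct S V) : Set (List V) :=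
  {s | ∃ t ∈ A.tuples, sliceOf s t}

/-- The universe of the efficient representation `Ĝ(A)`: a node `w_a` (left) for each
tuple `a` and a node `v_s` (right) for each slice `s`. -/
def hatUniv {S V : Type*} (A : Struct S V) : Set (List V ⊕ List V) :=
  (Sum.inl '' A.tuples) ∪ (Sum.inr '' slicesOf A)

/-- The edge relation `E_{i,j}` of `Ĝ(A)`. -/
def hatE {S V : Type*} (A : Struct S V) (i j : ℕ) :
    Set ((List V ⊕ List V) × (List V ⊕ List V)) :=
  {p | (∃ a s, p = (Sum.inl a, Sum.inr s) ∧ a ∈ A.tuples ∧ sliceOf s a ∧ (i, j) ∈ stpL a s) ∨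
       (∃ s b, p = (Sum.inr s, Sum.inl b) ∧ b ∈ A.tuples ∧ sliceOf s b ∧ (i, j) ∈ stpL s b)}

open Classical in
theorem slice_bound {V : Type*} (t : List V) (n : ℕ) (hn : t.length ≤ n) :
    {s : List V | sliceOf s t}.Finite ∧
      {s : List V | sliceOf s t}.ncard ≤ n * n.factorial := by
  set F := {x // x ∈ t.toFinset} with hF
  have hlen : ∀ s : List V, sliceOf s t → s.length - 1 < n ∧ s.length - 1 + 1 = s.length := by
    intro s hs
    obtain ⟨hne, hnd, hsub⟩ := hs
    have h1 : 1 ≤ s.length := List.length_pos_iff.2 hne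
    have h2 : s.length ≤ n := by
      have e1 : s.toFinset.card = s.length := List.toFinset_card_of_nodup hnd
      have e2 : s.toFinset ⊆ t.toFinset := by
        intro x hx; rw [List.mem_toFinset] at *; exact hsub x hx
      have := Finset.card_le_card e2
      have := t.toFinset_card_le
      omega
    omega
  have hget : ∀ (s : List V), sliceOf s t → ∀ (i : ℕ) (h : i < s.length),
      s.get ⟨i, h⟩ ∈ t.toFinset := by
    intro s hs i h
    rw [List.mem_toFinset]
    exact hs.2.2 _ (s.get_mem _)
  let f : {s : List V // sliceOf s t} → Σ m : Fin n, (Fin (m.1 + 1) ↪ F) := fun ⟨s, hs⟩ =>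
    ⟨⟨s.length - 1, (hlen s hs).1⟩,
      ⟨fun i => ⟨s.get ⟨i.1, by
          have h2 := (hlen s hs).2; have hi := i.isLt
          simp only [Fin.val_mk] at hi; omega⟩,
        hget s hs _ _⟩, by
        intro a b hab
        have hinj := List.nodup_iff_injective_get.1 hs.2.1
        have hab' := congrArg Subtype.val hab
        have := hinj hab'
        exact Fin.ext (by simpa using congrArg Fin.val this)⟩⟩
  let g : (Σ m : Fin n, (Fin (m.1 + 1) ↪ F)) → List V := fun ⟨m, e⟩ => List.ofFn (fun i => (e i).1)
  have hgf : ∀ s, g (f s) = s.1 := by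
    rintro ⟨s, hs⟩
    apply List.ext_get
    · simp [g, f, (hlen s hs).2]
    · intro i h1 h2
      simp only [g, f, List.get_ofFn]
      rfl
  have hinj : Function.Injective f := by
    intro a b hab
    have := congrArg g hab
    rw [hgf, hgf] at this
    exact Subtype.ext this
  have hfinT : Finite (Σ m : Fin n, (Fin (m.1 + 1) ↪ F)) := by infer_instance
  have hfin : {s : List V | sliceOf s t}.Finite := by
    rw [← Set.finite_coe_iff]
    exact Finite.of_injective f hinj
  refine ⟨hfin, ?_⟩
  have h1 : {s : List V | sliceOf s t}.ncard ≤ Nat.card (Σ m : Fin n, (Fin (m.1 + 1) ↪ F)) := by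
    rw [← Nat.card_coe_set_eq]
    exact Nat.card_le_card_of_injective f hinj
  have hcardF : Fintype.card F ≤ n := by
    rw [Fintype.card_coe]
    exact le_trans t.toFinset_card_le hn
  have h2 : Nat.card (Σ m : Fin n, (Fin (m.1 + 1) ↪ F)) ≤ n * n.factorial := by
    rw [Nat.card_eq_fintype_card, Fintype.card_sigma]
    calc ∑ m : Fin n, Fintype.card (Fin (m.1 + 1) ↪ F)
        ≤ ∑ _m : Fin n, n.factorial := by
          apply Finset.sum_le_sum
          intro m _
          rw [Fintype.card_embedding_eq, Fintype.card_fin]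
          calc (Fintype.card F).descFactorial (m.1 + 1)
              ≤ (Fintype.card F).factorial := by
                rcases le_or_gt (m.1+1) (Fintype.card F) with h|h
                · calc (Fintype.card F).descFactorial (m.1+1)
                      ≤ (Fintype.card F - (m.1+1)).factorial *
                        (Fintype.card F).descFactorial (m.1+1) :=
                        Nat.le_mul_of_pos_left _ (Nat.factorial_pos _)
                    _ = (Fintype.card F).factorial := Nat.factorial_mul_descFactorial h
                · rw [Nat.descFactorial_of_lt h]; exact Nat.zero_le _
            _ ≤ n.factorial := Nat.factorial_le hcardF
      _ = n * n.factorial := by simp [Finset.card_univ, mul_comm]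
  omega

theorem aux_biUnion_bound {α β : Type*} (s : Finset α) (f : α → Set β) (m : ℕ)
    (hfin : ∀ a ∈ s, (f a).Finite) (hm : ∀ a ∈ s, (f a).ncard ≤ m) :
    (⋃ a ∈ s, f a).Finite ∧ (⋃ a ∈ s, f a).ncard ≤ s.card * m := by
  classical
  induction s using Finset.induction with
  | empty => simp
  | @insert b s hb ih =>
    have h1 := hfin b (Finset.mem_insert_self b s)
    have h2 := hm b (Finset.mem_insert_self b s)
    obtain ⟨ihf, ihc⟩ := ih (fun a ha => hfin a (Finset.mem_insert_of_mem ha))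
      (fun a ha => hm a (Finset.mem_insert_of_mem ha))
    rw [Finset.set_biUnion_insert]
    refine ⟨h1.union ihf, ?_⟩
    calc (f b ∪ ⋃ a ∈ s, f a).ncard ≤ (f b).ncard + (⋃ a ∈ s, f a).ncard :=
          Set.ncard_union_le _ _
      _ ≤ m + s.card * m := Nat.add_le_add h2 ihc
      _ = (insert b s).card * m := by
          rw [Finset.card_insert_of_notMem hb]; ring

/-- Size bounds for the efficient representation `Ĝ(A)`, where `k` is the maximum
arity of the signature: `|V(Ĝ(A))| ≤ (1 + k·k!)·|τ(A)|`, each edge relation has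
at most `2·k·k!·|τ(A)|` edges, and the total number of edges is at most
`2·k³·k!·|τ(A)|`. -/
theorem stmt14 {S V : Type*} [Fintype S] (ar : S → ℕ) (A : Struct S V)
    (hlen : ∀ R, ∀ t ∈ A.rel R, t.length = ar R)
    (hFin : A.tuples.Finite)
    (k : ℕ) (hk : k = Finset.univ.sup ar) :
    (hatUniv A).ncard ≤ (1 + k * k.factorial) * A.tuples.ncard ∧
    (∀ i j : ℕ, i < k → j < k →
      (hatE A i j).ncard ≤ 2 * k * k.factorial * A.tuples.ncard) ∧
    (∑ i ∈ Finset.range k, ∑ j ∈ Finset.range k, (hatE A i j).ncard)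
      ≤ 2 * k ^ 3 * k.factorial * A.tuples.ncard := by
  classical
  have htk : ∀ t ∈ A.tuples, t.length ≤ k := by
    intro t ht
    obtain ⟨_, ⟨R, rfl⟩, hR⟩ := ht
    rw [hlen R t hR, hk]
    exact Finset.le_sup (Finset.mem_univ R)
  set τ := A.tuples.ncard with hτ
  have hTcard : hFin.toFinset.card = τ := by
    exact (Set.ncard_eq_toFinset_card _ hFin).symm
  -- slices bound
  have hslU : slicesOf A = ⋃ t ∈ hFin.toFinset, {s | sliceOf s t} := by
    ext s
    simp [slicesOf, Set.Finite.mem_toFinset]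
  obtain ⟨hslFin, hslCard⟩ := by
    refine aux_biUnion_bound hFin.toFinset (fun t => {s : List V | sliceOf s t})
      (k * k.factorial) (fun t ht => ?_) (fun t ht => ?_)
    · exact (slice_bound t k (htk t (hFin.mem_toFinset.1 ht))).1
    · exact (slice_bound t k (htk t (hFin.mem_toFinset.1 ht))).2
  rw [← hslU] at hslFin hslCard
  rw [hTcard] at hslCard
  -- vertex bound
  have hv : (hatUniv A).ncard ≤ (1 + k * k.factorial) * τ := by
    calc (hatUniv A).ncard
        ≤ (Sum.inl '' A.tuples : Set (List V ⊕ List V)).ncard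
          + (Sum.inr '' slicesOf A : Set (List V ⊕ List V)).ncard :=
          Set.ncard_union_le _ _
      _ = τ + (slicesOf A).ncard := by
          rw [Set.ncard_image_of_injective _ Sum.inl_injective,
            Set.ncard_image_of_injective _ Sum.inr_injective]
      _ ≤ τ + τ * (k * k.factorial) := Nat.add_le_add_left hslCard _
      _ = (1 + k * k.factorial) * τ := by ring
  -- pair set bound
  set P : Set (List V × List V) := {p | p.1 ∈ A.tuples ∧ sliceOf p.2 p.1} with hP
  have hPU : P = ⋃ a ∈ hFin.toFinset, (Prod.mk a '' {s | sliceOf s a}) := by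
    ext ⟨a, s⟩
    simp only [hP, Set.mem_setOf_eq, Set.mem_iUnion, Set.Finite.mem_toFinset, Set.mem_image,
      Prod.mk.injEq]
    constructor
    · rintro ⟨h1, h2⟩; exact ⟨a, h1, s, h2, rfl, rfl⟩
    · rintro ⟨b, hb, x, hx, rfl, rfl⟩; exact ⟨hb, hx⟩
  obtain ⟨hPFin, hPCard⟩ := by
    refine aux_biUnion_bound hFin.toFinset (fun a => Prod.mk a '' {s : List V | sliceOf s a})
      (k * k.factorial) (fun a ha => ?_) (fun a ha => ?_)
    · exact ((slice_bound a k (htk a (hFin.mem_toFinset.1 ha))).1).image _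
    · rw [Set.ncard_image_of_injective _ (fun x y h => by simpa using h)]
      exact (slice_bound a k (htk a (hFin.mem_toFinset.1 ha))).2
  rw [← hPU] at hPFin hPCard
  rw [hTcard] at hPCard
  -- edge bound
  have he : ∀ i j : ℕ, (hatE A i j).ncard ≤ 2 * k * k.factorial * τ := by
    intro i j
    have hsub : hatE A i j ⊆
        ((fun p : List V × List V => ((Sum.inl p.1 : List V ⊕ List V), (Sum.inr p.2 : List V ⊕ List V))) '' P)
        ∪ ((fun p : List V × List V => ((Sum.inr p.2 : List V ⊕ List V), (Sum.inl p.1 : List V ⊕ List V))) '' P) := by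
      rintro p (⟨a, s, rfl, ha, hs, _⟩ | ⟨s, b, rfl, hb, hs, _⟩)
      · exact Or.inl ⟨(a, s), ⟨ha, hs⟩, rfl⟩
      · exact Or.inr ⟨(b, s), ⟨hb, hs⟩, rfl⟩
    have hinj1 : Function.Injective
        (fun p : List V × List V => ((Sum.inl p.1 : List V ⊕ List V), (Sum.inr p.2 : List V ⊕ List V))) := by
      rintro ⟨a, b⟩ ⟨c, d⟩ h
      simp only [Prod.mk.injEq, Sum.inl.injEq, Sum.inr.injEq] at h
      exact Prod.ext h.1 h.2
    have hinj2 : Function.Injective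
        (fun p : List V × List V => ((Sum.inr p.2 : List V ⊕ List V), (Sum.inl p.1 : List V ⊕ List V))) := by
      rintro ⟨a, b⟩ ⟨c, d⟩ h
      simp only [Prod.mk.injEq, Sum.inl.injEq, Sum.inr.injEq] at h
      exact Prod.ext h.2 h.1
    calc (hatE A i j).ncard
        ≤ (((fun p : List V × List V => ((Sum.inl p.1 : List V ⊕ List V), (Sum.inr p.2 : List V ⊕ List V))) '' P)
          ∪ ((fun p : List V × List V => ((Sum.inr p.2 : List V ⊕ List V), (Sum.inl p.1 : List V ⊕ List V))) '' P)).ncard :=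
          Set.ncard_le_ncard hsub ((hPFin.image _).union (hPFin.image _))
      _ ≤ ((fun p : List V × List V => ((Sum.inl p.1 : List V ⊕ List V), (Sum.inr p.2 : List V ⊕ List V))) '' P).ncard
          + ((fun p : List V × List V => ((Sum.inr p.2 : List V ⊕ List V), (Sum.inl p.1 : List V ⊕ List V))) '' P).ncard :=
          Set.ncard_union_le _ _
      _ = P.ncard + P.ncard := by
          rw [Set.ncard_image_of_injective _ hinj1, Set.ncard_image_of_injective _ hinj2]
      _ ≤ τ * (k * k.factorial) + τ * (k * k.factorial) := Nat.add_le_add hPCard hPCard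
      _ = 2 * k * k.factorial * τ := by ring
  refine ⟨hv, fun i j _ _ => he i j, ?_⟩
  calc ∑ i ∈ Finset.range k, ∑ j ∈ Finset.range k, (hatE A i j).ncard
      ≤ ∑ _i ∈ Finset.range k, ∑ _j ∈ Finset.range k, 2 * k * k.factorial * τ := by
        refine Finset.sum_le_sum fun i _ => Finset.sum_le_sum fun j _ => he i j
    _ = 2 * k ^ 3 * k.factorial * τ := by
        simp [Finset.sum_const, Finset.card_range]; ring
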